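/- For every Δ > 0, set η(Δ) = 2·arcsin(1/(√2·cosh(Δ/2))), which lies in (0, π/2). Then for any numbers a ∈ (0, Δ) and β, γ > 0 with β + γ < η(Δ), there exists a hyperbolic triangle ABC with BC = a, angle B = β, and angle C = γ; moreover the angle at A is strictly greater than π/2. -/
import Mathlib

open Real

set_option maxHeartbeats 1000000 in
/-- For every `Δ > 0`, set `η(Δ) = 2·arcsin(1/(√2·cosh(Δ/2)))`, which lies in `(0, π/2)`.
Then for any `a ∈ (0, Δ)` and `β, γ > 0` with `β + γ < η(Δ)`, there exists a hyperbolic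
triangle `ABC` with `BC = a`, angle `B = β`, angle `C = γ` (a triangle with these data exists
iff `-cos β cos γ + sin β sin γ cosh a ∈ (-1, 1)`, and then the angle at `A` is
`arccos (-cos β cos γ + sin β sin γ cosh a)` by the dual cosine law); moreover the angle at
`A` is strictly greater than `π/2`. -/
theorem exists_hyperbolic_triangle_obtuse (Δ : ℝ) (hΔ : 0 < Δ) :
    (2 * Real.arcsin (1 / (Real.sqrt 2 * Real.cosh (Δ / 2))) ∈ Set.Ioo 0 (π / 2)) ∧
    ∀ a β γ : ℝ, a ∈ Set.Ioo 0 Δ → 0 < β → 0 < γ →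
      β + γ < 2 * Real.arcsin (1 / (Real.sqrt 2 * Real.cosh (Δ / 2))) →
      (-Real.cos β * Real.cos γ + Real.sin β * Real.sin γ * Real.cosh a ∈ Set.Ioo (-1 : ℝ) 1) ∧
      Real.arccos (-Real.cos β * Real.cos γ + Real.sin β * Real.sin γ * Real.cosh a) > π / 2 := by
  have hpi := Real.pi_pos
  have hc : 1 < Real.cosh (Δ / 2) := Real.one_lt_cosh.mpr (by positivity)
  have hs2 : (1:ℝ) < Real.sqrt 2 := by
    rw [show (1:ℝ) = Real.sqrt 1 by simp]
    exact Real.sqrt_lt_sqrt (by norm_num) (by norm_num)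
  set c := Real.cosh (Δ / 2) with hcdef
  set u := 1 / (Real.sqrt 2 * c) with hudef
  have hu0 : 0 < u := by positivity
  have hsq2 : Real.sqrt 2 ^ 2 = 2 := Real.sq_sqrt (by norm_num)
  have hu1 : u < Real.sqrt 2 / 2 := by
    rw [hudef, div_lt_div_iff₀ (by positivity) (by norm_num)]
    nlinarith
  have hu1' : u ≤ 1 := by nlinarith [hu1, hs2]
  -- arcsin u < π/4
  have harc4 : Real.arcsin (Real.sqrt 2 / 2) = π / 4 := by
    rw [← Real.sin_pi_div_four]
    exact Real.arcsin_sin (by linarith) (by linarith)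
  have hlt : Real.arcsin u < π / 4 := by
    rw [← harc4]
    apply Real.strictMonoOn_arcsin ⟨by linarith, hu1'⟩ ⟨by linarith, by nlinarith [hs2]⟩ hu1
  have hpos : 0 < Real.arcsin u := Real.arcsin_pos.mpr hu0
  refine ⟨⟨by linarith, by linarith⟩, ?_⟩
  intro a β γ ⟨ha0, haΔ⟩ hβ hγ hsum
  have hβγπ : β + γ < π / 2 := by linarith
  -- basic sine/cosine facts
  have hsinβ : 0 < Real.sin β := Real.sin_pos_of_pos_of_lt_pi hβ (by linarith)
  have hsinγ : 0 < Real.sin γ := Real.sin_pos_of_pos_of_lt_pi hγ (by linarith)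
  have hcosβ : Real.cos β ≤ 1 := Real.cos_le_one β
  have hcosγ : Real.cos γ ≤ 1 := Real.cos_le_one γ
  have hcosβ0 : 0 < Real.cos β := Real.cos_pos_of_mem_Ioo ⟨by linarith, by linarith⟩
  have hcosγ0 : 0 < Real.cos γ := Real.cos_pos_of_mem_Ioo ⟨by linarith, by linarith⟩
  have hcosha : 1 < Real.cosh a := Real.one_lt_cosh.mpr (ne_of_gt ha0)
  -- sin β sin γ ≤ sin((β+γ)/2)^2
  set t := (β + γ) / 2 with htdef
  have ht0 : 0 < t := by positivity
  have htlt : t < Real.arcsin u := by rw [htdef]; linarith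
  have hsin_sq : Real.sin t ^ 2 = (1 - Real.cos (β + γ)) / 2 := by
    have h := Real.cos_sq t
    have h2t : 2 * t = β + γ := by rw [htdef]; ring
    rw [h2t] at h
    have hpy := Real.sin_sq_add_cos_sq t
    linarith
  have hprod : Real.sin β * Real.sin γ ≤ Real.sin t ^ 2 := by
    have h1 := Real.cos_sub β γ
    have h2 := Real.cos_add β γ
    have h3 : Real.cos (β - γ) ≤ 1 := Real.cos_le_one _
    rw [hsin_sq]; nlinarith
  -- cosh a < 2 c^2 - 1
  have hcoshΔ : Real.cosh Δ = 2 * c ^ 2 - 1 := by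
    have h1 := Real.cosh_two_mul (Δ / 2)
    have h2 := Real.cosh_sq_sub_sinh_sq (Δ / 2)
    rw [← hcdef] at h1 h2
    rw [show Δ = 2 * (Δ / 2) by ring, h1]
    linarith
  have hcoshalt : Real.cosh a < 2 * c ^ 2 - 1 := by
    rw [← hcoshΔ]
    exact Real.cosh_lt_cosh.mpr (by rw [abs_of_pos ha0, abs_of_pos hΔ]; exact haΔ)
  -- sin t < sin (arcsin u) = u
  have hsinu : Real.sin (Real.arcsin u) = u := Real.sin_arcsin (by linarith) hu1'
  have hsint_lt : Real.sin t < u := by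
    rw [← hsinu]
    exact Real.strictMonoOn_sin ⟨by linarith, by linarith⟩ ⟨by linarith, by linarith⟩ htlt
  have hsint0 : 0 < Real.sin t := Real.sin_pos_of_pos_of_lt_pi ht0 (by linarith)
  have hu_sq : u ^ 2 * (2 * c ^ 2) = 1 := by
    rw [hudef, div_pow, one_pow, mul_pow, hsq2, one_div,
      inv_mul_cancel₀ (by positivity : (2 * c ^ 2 : ℝ) ≠ 0)]
  -- key: x < 0
  have hx_lt : -Real.cos β * Real.cos γ + Real.sin β * Real.sin γ * Real.cosh a < 0 := by
    have hcosadd := Real.cos_add β γ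
    have h1 : Real.sin β * Real.sin γ * (Real.cosh a - 1) ≤ Real.sin t ^ 2 * (Real.cosh a - 1) :=
      mul_le_mul_of_nonneg_right hprod (by linarith)
    have h2 : Real.sin t ^ 2 * (Real.cosh a - 1) < Real.sin t ^ 2 * (2 * c ^ 2 - 2) :=
      mul_lt_mul_of_pos_left (by linarith) (pow_pos hsint0 2)
    have h3 : Real.sin t ^ 2 < u ^ 2 := by nlinarith
    have h4 : Real.sin t ^ 2 * (2 * c ^ 2 - 2) < u ^ 2 * (2 * c ^ 2 - 2) := by nlinarith
    nlinarith [hsin_sq]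
  have hx_gt : (-1 : ℝ) < -Real.cos β * Real.cos γ + Real.sin β * Real.sin γ * Real.cosh a := by
    have h5 : Real.cos β * Real.cos γ ≤ 1 := by nlinarith
    have h6 : 0 < Real.sin β * Real.sin γ * Real.cosh a :=
      mul_pos (mul_pos hsinβ hsinγ) (Real.cosh_pos a)
    linarith
  refine ⟨⟨hx_gt, by linarith⟩, ?_⟩
  rw [Real.arccos, gt_iff_lt, lt_sub_iff_add_lt]
  have : Real.arcsin (-Real.cos β * Real.cos γ + Real.sin β * Real.sin γ * Real.cosh a) < 0 :=
    Real.arcsin_lt_zero.mpr hx_lt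
  linarith
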